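/- Suppose Assumption (B) holds. Then the boundary trace inequality holds: for every s > 0 and every test function f, μ_W^∂(f²) ≤ s·g_V(f) + ( s^{-1}·C₀²C̄₂² + C₀C̄₁ )·μ_V(f²). -/

import Mathlib

open MeasureTheory Real

noncomputable section

def Hs (d : ℕ) : Set (EuclideanSpace ℝ (Fin (d + 1))) := {x | 0 < x 0}

def iota (d : ℕ) (y : EuclideanSpace ℝ (Fin d)) : EuclideanSpace ℝ (Fin (d + 1)) :=
  WithLp.toLp 2 (Fin.cons 0 (WithLp.ofLp y))

def IsTest (d : ℕ) (f : EuclideanSpace ℝ (Fin (d + 1)) → ℝ) : Prop :=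
  ContDiff ℝ 1 f ∧ (∃ C, ∀ x, |f x| ≤ C) ∧ ∃ C, ∀ x, ‖gradient f x‖ ≤ C

def IsTestB (d : ℕ) (g : EuclideanSpace ℝ (Fin d) → ℝ) : Prop :=
  ContDiff ℝ 1 g ∧ (∃ C, ∀ y, |g y| ≤ C) ∧ ∃ C, ∀ y, ‖gradient g y‖ ≤ C

def ZV (d : ℕ) (V : EuclideanSpace ℝ (Fin (d + 1)) → ℝ) : ℝ :=
  ∫ x in Hs d, Real.exp (V x)

def ZW (d : ℕ) (W : EuclideanSpace ℝ (Fin d) → ℝ) : ℝ :=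
  ∫ y, Real.exp (W y)

/-- mean of `φ` under `μ_V`. -/
def muV (d : ℕ) (V : EuclideanSpace ℝ (Fin (d + 1)) → ℝ)
    (φ : EuclideanSpace ℝ (Fin (d + 1)) → ℝ) : ℝ :=
  (ZV d V)⁻¹ * ∫ x in Hs d, φ x * Real.exp (V x)

/-- mean of `ψ` under `ν_W`. -/
def nuW (d : ℕ) (W : EuclideanSpace ℝ (Fin d) → ℝ)
    (ψ : EuclideanSpace ℝ (Fin d) → ℝ) : ℝ :=
  (ZW d W)⁻¹ * ∫ y, ψ y * Real.exp (W y)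

def theta (d : ℕ) (V : EuclideanSpace ℝ (Fin (d + 1)) → ℝ)
    (W : EuclideanSpace ℝ (Fin d) → ℝ) (γ : ℝ) : ℝ :=
  γ * ZW d W / (γ * ZW d W + ZV d V)

/-- mean of `φ` under `μ = θ μ_V + (1-θ) μ_W^∂`. -/
def muM (d : ℕ) (V : EuclideanSpace ℝ (Fin (d + 1)) → ℝ)
    (W : EuclideanSpace ℝ (Fin d) → ℝ) (γ : ℝ)
    (φ : EuclideanSpace ℝ (Fin (d + 1)) → ℝ) : ℝ :=
  theta d V W γ * muV d V φ + (1 - theta d V W γ) * nuW d W (fun y => φ (iota d y))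

def gV (d : ℕ) (V f : EuclideanSpace ℝ (Fin (d + 1)) → ℝ) : ℝ :=
  muV d V (fun x => ‖gradient f x‖ ^ 2)

def gW (d : ℕ) (W : EuclideanSpace ℝ (Fin d) → ℝ)
    (f : EuclideanSpace ℝ (Fin (d + 1)) → ℝ) : ℝ :=
  nuW d W (fun y => ‖gradient (fun z => f (iota d z)) y‖ ^ 2)

def Edir (d : ℕ) (V : EuclideanSpace ℝ (Fin (d + 1)) → ℝ)
    (W : EuclideanSpace ℝ (Fin d) → ℝ) (γ δ : ℝ)
    (f : EuclideanSpace ℝ (Fin (d + 1)) → ℝ) : ℝ :=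
  theta d V W γ * gV d V f + (1 - theta d V W γ) * δ * gW d W f

def supNorm (d : ℕ) (f : EuclideanSpace ℝ (Fin (d + 1)) → ℝ) : ℝ := ⨆ x, |f x|

def lap (d : ℕ) (h : EuclideanSpace ℝ (Fin (d + 1)) → ℝ)
    (x : EuclideanSpace ℝ (Fin (d + 1))) : ℝ :=
  ∑ i : Fin (d + 1),
    fderiv ℝ (fun z => fderiv ℝ h z (EuclideanSpace.single i 1)) x (EuclideanSpace.single i 1)

def LV (d : ℕ) (V h : EuclideanSpace ℝ (Fin (d + 1)) → ℝ)
    (x : EuclideanSpace ℝ (Fin (d + 1))) : ℝ :=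
  lap d h x + (inner ℝ (gradient V x) (gradient h x) : ℝ)

def M0 (d : ℕ) (V : EuclideanSpace ℝ (Fin (d + 1)) → ℝ)
    (W : EuclideanSpace ℝ (Fin d) → ℝ) : ℝ :=
  ⨆ y, max (W y - V (iota d y)) 0

def C0 (d : ℕ) (V : EuclideanSpace ℝ (Fin (d + 1)) → ℝ)
    (W : EuclideanSpace ℝ (Fin d) → ℝ) : ℝ :=
  (ZV d V / ZW d W) * Real.exp (M0 d V W)

def C1 (d : ℕ) (V h : EuclideanSpace ℝ (Fin (d + 1)) → ℝ) : ℝ :=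
  Real.sqrt (muV d V (fun x => (max (-(LV d V h x)) 0) ^ 2))

def C2 (d : ℕ) (V h : EuclideanSpace ℝ (Fin (d + 1)) → ℝ) : ℝ :=
  Real.sqrt (muV d V (fun x => ‖gradient h x‖ ^ 2))

/-- Assumption (A). -/
def AssumptionA (d : ℕ) (V : EuclideanSpace ℝ (Fin (d + 1)) → ℝ)
    (W : EuclideanSpace ℝ (Fin d) → ℝ) (h : EuclideanSpace ℝ (Fin (d + 1)) → ℝ) : Prop :=
  ContDiff ℝ 2 h ∧
  (∀ y, fderiv ℝ h (iota d y) (EuclideanSpace.single 0 1) = 1) ∧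
  BddAbove (Set.range fun y => max (W y - V (iota d y)) 0) ∧
  IntegrableOn (fun x => (max (-(LV d V h x)) 0) ^ 2 * Real.exp (V x)) (Hs d) ∧
  IntegrableOn (fun x => ‖gradient h x‖ ^ 2 * Real.exp (V x)) (Hs d) ∧
  ∀ φ : EuclideanSpace ℝ (Fin (d + 1)) → ℝ, (∃ K, LipschitzWith K φ) →
    (∃ C, ∀ x, |φ x| ≤ C) →
    (∫ y, φ (iota d y) * Real.exp (V (iota d y))) =
      - ∫ x in Hs d,
          (φ x * LV d V h x + (inner ℝ (gradient φ x) (gradient h x) : ℝ)) * Real.exp (V x)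

/-- Assumption (B) with given sup constants. -/
def AssumptionB (d : ℕ) (V : EuclideanSpace ℝ (Fin (d + 1)) → ℝ)
    (W : EuclideanSpace ℝ (Fin d) → ℝ) (h : EuclideanSpace ℝ (Fin (d + 1)) → ℝ)
    (Cb1 Cb2 : ℝ) : Prop :=
  ContDiff ℝ 2 h ∧
  (∀ y, fderiv ℝ h (iota d y) (EuclideanSpace.single 0 1) = 1) ∧
  BddAbove (Set.range fun y => max (W y - V (iota d y)) 0) ∧
  IsLUB ((fun x => max (-(LV d V h x)) 0) '' {x : EuclideanSpace ℝ (Fin (d + 1)) | 0 ≤ x 0}) Cb1 ∧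
  IsLUB ((fun x => ‖gradient h x‖) '' {x : EuclideanSpace ℝ (Fin (d + 1)) | 0 ≤ x 0}) Cb2 ∧
  ∀ φ : EuclideanSpace ℝ (Fin (d + 1)) → ℝ, (∃ K, LipschitzWith K φ) →
    (∃ C, ∀ x, |φ x| ≤ C) →
    (∫ y, φ (iota d y) * Real.exp (V (iota d y))) =
      - ∫ x in Hs d,
          (φ x * LV d V h x + (inner ℝ (gradient φ x) (gradient h x) : ℝ)) * Real.exp (V x)



section Helpers

open EuclideanSpace in
lemma norm_grad {m : ℕ} (f : EuclideanSpace ℝ (Fin m) → ℝ) (x) :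
    ‖gradient f x‖ = ‖fderiv ℝ f x‖ := by
  simp [gradient, LinearIsometryEquiv.norm_map]

lemma measurable_grad {m : ℕ} (f : EuclideanSpace ℝ (Fin m) → ℝ) :
    Measurable (fun x => gradient f x) := by
  have h1 : Measurable (fderiv ℝ f) := measurable_fderiv ℝ f
  exact ((InnerProductSpace.toDual ℝ (EuclideanSpace ℝ (Fin m))).symm.continuous.measurable).comp h1

lemma continuous_grad {m : ℕ} {f : EuclideanSpace ℝ (Fin m) → ℝ} (hf : ContDiff ℝ 1 f) :
    Continuous (fun x => gradient f x) :=
  (InnerProductSpace.toDual ℝ (EuclideanSpace ℝ (Fin m))).symm.continuous.comp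
    (hf.continuous_fderiv one_ne_zero)

lemma isOpen_Hs (d : ℕ) : IsOpen (Hs d) := by
  have : Hs d = (EuclideanSpace.proj (0 : Fin (d+1)) :
      EuclideanSpace ℝ (Fin (d+1)) →L[ℝ] ℝ) ⁻¹' Set.Ioi 0 := rfl
  rw [this]
  exact isOpen_Ioi.preimage (EuclideanSpace.proj 0).continuous

lemma measurableSet_Hs (d : ℕ) : MeasurableSet (Hs d) := (isOpen_Hs d).measurableSet

lemma continuous_iota (d : ℕ) : Continuous (iota d) := by
  have : Continuous fun (y : EuclideanSpace ℝ (Fin d)) (i : Fin (d+1)) => (iota d y) i := by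
    refine continuous_pi fun i => ?_
    refine Fin.cases ?_ (fun j => ?_) i
    · simpa [iota] using (continuous_const : Continuous fun _ : EuclideanSpace ℝ (Fin d) => (0:ℝ))
    · simpa [iota] using (PiLp.continuous_apply 2 (fun _ : Fin d => ℝ) j)
  exact (PiLp.continuous_toLp 2 _).comp this

lemma norm_iota {d : ℕ} (y : EuclideanSpace ℝ (Fin d)) : ‖iota d y‖ = ‖y‖ := by
  simp [EuclideanSpace.norm_eq, iota, Fin.sum_univ_succ]

lemma iota_zero (d : ℕ) (y : EuclideanSpace ℝ (Fin d)) : (iota d y) 0 = 0 := rfl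

/-- cutoff functions -/
def cut (m : ℕ) (n : ℕ) (x : EuclideanSpace ℝ (Fin m)) : ℝ := min 1 (max 0 ((n:ℝ) - ‖x‖))

lemma cut_lip (m n : ℕ) : LipschitzWith 1 (cut m n) := by
  have h1 : LipschitzWith 1 (fun x : EuclideanSpace ℝ (Fin m) => (n:ℝ) - ‖x‖) := by
    refine LipschitzWith.of_dist_le_mul fun x y => ?_
    have := abs_norm_sub_norm_le x y
    simp only [Real.dist_eq, one_mul, sub_sub_sub_cancel_left, dist_eq_norm]
    rw [Real.norm_eq_abs, abs_sub_comm]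
    simpa using this
  have h2 : LipschitzWith 1 (fun t : ℝ => min 1 (max 0 t)) := by
    simpa using ((LipschitzWith.id (α := ℝ)).const_max (0:ℝ)).const_min 1
  have := h2.comp h1
  rw [one_mul] at this
  exact this

lemma cut_nonneg (m n : ℕ) (x) : 0 ≤ cut m n x := le_min zero_le_one (le_max_left _ _)
lemma cut_le_one (m n : ℕ) (x) : cut m n x ≤ 1 := min_le_left _ _
lemma cut_abs_le (m n : ℕ) (x) : |cut m n x| ≤ 1 := by
  rw [abs_of_nonneg (cut_nonneg m n x)]; exact cut_le_one m n x
lemma cut_eq_zero {m n : ℕ} {x} (hx : (n:ℝ) ≤ ‖x‖) : cut m n x = 0 := by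
  have h1 : max 0 ((n:ℝ) - ‖x‖) = 0 := max_eq_left (by linarith)
  rw [cut, h1, min_eq_right zero_le_one]
lemma cut_eq_one {m n : ℕ} {x} (hx : ‖x‖ + 1 ≤ (n:ℝ)) : cut m n x = 1 := by
  have h0 : (1:ℝ) ≤ (n:ℝ) - ‖x‖ := by linarith
  have h1 : max 0 ((n:ℝ) - ‖x‖) = (n:ℝ) - ‖x‖ := max_eq_right (by linarith [norm_nonneg x])
  rw [cut, h1, min_eq_left h0]

lemma cut_mono (m : ℕ) (x : EuclideanSpace ℝ (Fin m)) : Monotone (fun n : ℕ => cut m n x) := by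
  intro a b hab
  exact min_le_min le_rfl (max_le_max le_rfl
    (by simp only [sub_le_sub_iff_right]; exact_mod_cast hab))

lemma cut_continuous (m n : ℕ) : Continuous (cut m n) := (cut_lip m n).continuous

lemma cut_grad_le (m n : ℕ) (x) : ‖gradient (cut m n) x‖ ≤ 1 := by
  rw [norm_grad]
  simpa using norm_fderiv_le_of_lipschitz ℝ (cut_lip m n)

lemma continuous_LV {d : ℕ} {V h : EuclideanSpace ℝ (Fin (d + 1)) → ℝ}
    (hV : ContDiff ℝ 1 V) (hh : ContDiff ℝ 2 h) : Continuous (LV d V h) := by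
  have hlap : Continuous (lap d h) := by
    refine continuous_finset_sum _ fun i _ => ?_
    have hg : ContDiff ℝ 1 (fun z => fderiv ℝ h z (EuclideanSpace.single i 1)) := by
      have h1 : ContDiff ℝ 1 (fderiv ℝ h) := hh.fderiv_right (by norm_num)
      exact h1.clm_apply contDiff_const
    have h2 : Continuous (fun x => fderiv ℝ (fun z => fderiv ℝ h z (EuclideanSpace.single i 1)) x) :=
      hg.continuous_fderiv one_ne_zero
    exact (ContinuousLinearMap.apply ℝ ℝ (EuclideanSpace.single i 1)).continuous.comp h2
  exact hlap.add ((continuous_grad hV).inner (continuous_grad (hh.of_le one_le_two)))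

/-- Integrability of the boundary density. -/
lemma integrable_expV_iota (d : ℕ)
    (V h : EuclideanSpace ℝ (Fin (d + 1)) → ℝ) (Cb1 Cb2 : ℝ)
    (hV : ContDiff ℝ 1 V) (hh : ContDiff ℝ 2 h)
    (hZV : IntegrableOn (fun x => Real.exp (V x)) (Hs d))
    (hCb1 : ∀ x : EuclideanSpace ℝ (Fin (d+1)), 0 ≤ x 0 → max (-(LV d V h x)) 0 ≤ Cb1)
    (hCb2 : ∀ x : EuclideanSpace ℝ (Fin (d+1)), 0 ≤ x 0 → ‖gradient h x‖ ≤ Cb2)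
    (hGG : ∀ φ : EuclideanSpace ℝ (Fin (d + 1)) → ℝ, (∃ K, LipschitzWith K φ) →
      (∃ C, ∀ x, |φ x| ≤ C) →
      (∫ y, φ (iota d y) * Real.exp (V (iota d y))) =
        - ∫ x in Hs d,
            (φ x * LV d V h x + (inner ℝ (gradient φ x) (gradient h x) : ℝ)) * Real.exp (V x)) :
    Integrable (fun y => Real.exp (V (iota d y))) := by
  have hCb2' : (0:ℝ) ≤ Cb2 := le_trans (norm_nonneg _)
    (hCb2 (iota d 0) (by rw [iota_zero]))
  have hLV : Continuous (LV d V h) := continuous_LV hV hh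
  have hgh : Continuous (fun x => gradient h x) := continuous_grad (hh.of_le one_le_two)
  have hexpV : Continuous fun x : EuclideanSpace ℝ (Fin (d+1)) => Real.exp (V x) :=
    Real.continuous_exp.comp hV.continuous
  have hexpVi : Continuous fun y => Real.exp (V (iota d y)) := hexpV.comp (continuous_iota d)
  have key : ∀ n : ℕ, (∫ y, cut (d+1) n (iota d y) * Real.exp (V (iota d y)))
      ≤ (Cb1 + Cb2) * ∫ x in Hs d, Real.exp (V x) := by
    intro n
    rw [hGG (cut (d+1) n) ⟨1, cut_lip _ n⟩ ⟨1, cut_abs_le _ n⟩]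
    have hint1 : IntegrableOn (fun x => (cut (d+1) n x * LV d V h x) * Real.exp (V x)) (Hs d) := by
      refine (Continuous.integrable_of_hasCompactSupport
        (((cut_continuous _ n).mul hLV).mul hexpV) ?_).integrableOn
      refine HasCompactSupport.intro (isCompact_closedBall (0 : EuclideanSpace ℝ (Fin (d+1))) n)
        fun x hx => ?_
      have hxn : (n:ℝ) ≤ ‖x‖ := by
        have := hx
        simp only [Metric.mem_closedBall, dist_zero_right, not_le] at this
        exact this.le
      simp [cut_eq_zero hxn]
    have hint2 : IntegrableOn (fun x =>
        (inner ℝ (gradient (cut (d+1) n) x) (gradient h x) : ℝ) * Real.exp (V x)) (Hs d) := by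
      refine Integrable.mono' (hZV.const_mul Cb2) ?_ ?_
      · exact (((measurable_grad _).inner hgh.measurable).mul
          hexpV.measurable).aestronglyMeasurable
      · refine (ae_restrict_iff' (measurableSet_Hs d)).2 (Filter.Eventually.of_forall
          fun x hx => ?_)
        rw [norm_mul, Real.norm_eq_abs (Real.exp _), abs_of_pos (Real.exp_pos _)]
        refine mul_le_mul_of_nonneg_right ?_ (Real.exp_pos _).le
        calc ‖(inner ℝ (gradient (cut (d+1) n) x) (gradient h x) : ℝ)‖
            ≤ ‖gradient (cut (d+1) n) x‖ * ‖gradient h x‖ := norm_inner_le_norm _ _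
          _ ≤ 1 * Cb2 := mul_le_mul (cut_grad_le _ _ x) (hCb2 x (le_of_lt hx))
              (norm_nonneg _) zero_le_one
          _ = Cb2 := one_mul _
    have hintG : IntegrableOn (fun x => (cut (d+1) n x * LV d V h x
        + (inner ℝ (gradient (cut (d+1) n) x) (gradient h x) : ℝ)) * Real.exp (V x)) (Hs d) := by
      have := hint1.add hint2
      refine this.congr_fun (fun x _ => ?_) (measurableSet_Hs d)
      simp only [Pi.add_apply]
      ring
    rw [← MeasureTheory.integral_neg, ← MeasureTheory.integral_const_mul]
    refine setIntegral_mono_on hintG.neg (hZV.const_mul _) (measurableSet_Hs d) fun x hx => ?_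
    have hx0 : (0:ℝ) ≤ x 0 := (le_of_lt hx)
    have h1 : cut (d+1) n x * (-(LV d V h x)) ≤ Cb1 := by
      calc cut (d+1) n x * (-(LV d V h x)) ≤ cut (d+1) n x * max (-(LV d V h x)) 0 :=
            mul_le_mul_of_nonneg_left (le_max_left _ _) (cut_nonneg _ _ _)
        _ ≤ 1 * Cb1 := mul_le_mul (cut_le_one _ _ _) (hCb1 x hx0) (le_max_right _ _) zero_le_one
        _ = Cb1 := one_mul _
    have h2 : -(inner ℝ (gradient (cut (d+1) n) x) (gradient h x) : ℝ) ≤ Cb2 := by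
      have hip : ‖(inner ℝ (gradient (cut (d+1) n) x) (gradient h x) : ℝ)‖ ≤ Cb2 := by
        calc ‖(inner ℝ (gradient (cut (d+1) n) x) (gradient h x) : ℝ)‖
            ≤ ‖gradient (cut (d+1) n) x‖ * ‖gradient h x‖ := norm_inner_le_norm _ _
          _ ≤ 1 * Cb2 := mul_le_mul (cut_grad_le _ _ x) (hCb2 x hx0) (norm_nonneg _) zero_le_one
          _ = Cb2 := one_mul _
      rw [Real.norm_eq_abs] at hip
      linarith [neg_abs_le (inner ℝ (gradient (cut (d+1) n) x) (gradient h x) : ℝ)]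
    have h3 : (cut (d+1) n x * (-(LV d V h x))
        + -(inner ℝ (gradient (cut (d+1) n) x) (gradient h x) : ℝ)) * Real.exp (V x)
        ≤ (Cb1 + Cb2) * Real.exp (V x) :=
      mul_le_mul_of_nonneg_right (add_le_add h1 h2) (Real.exp_pos _).le
    calc -((cut (d+1) n x * LV d V h x
          + (inner ℝ (gradient (cut (d+1) n) x) (gradient h x) : ℝ)) * Real.exp (V x))
        = (cut (d+1) n x * (-(LV d V h x))
          + -(inner ℝ (gradient (cut (d+1) n) x) (gradient h x) : ℝ)) * Real.exp (V x) := by ring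
      _ ≤ (Cb1 + Cb2) * Real.exp (V x) := h3
  set g : ℕ → EuclideanSpace ℝ (Fin d) → ENNReal := fun n y =>
    ENNReal.ofReal (cut (d+1) n (iota d y) * Real.exp (V (iota d y))) with hg
  have hgmeas : ∀ n, Measurable (g n) := fun n =>
    ENNReal.measurable_ofReal.comp
      ((((cut_continuous _ n).comp (continuous_iota d)).mul hexpVi).measurable)
  have hgmono : Monotone g := fun a b hab y =>
    ENNReal.ofReal_le_ofReal
      (mul_le_mul_of_nonneg_right (cut_mono _ _ hab) (Real.exp_pos _).le)
  have hsup : ∀ y, (⨆ n, g n y) = ENNReal.ofReal (Real.exp (V (iota d y))) := by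
    intro y
    refine le_antisymm (iSup_le fun n => ENNReal.ofReal_le_ofReal
      (mul_le_of_le_one_left (Real.exp_pos _).le (cut_le_one _ _ _))) ?_
    obtain ⟨n, hn⟩ : ∃ n : ℕ, ‖iota d y‖ + 1 ≤ (n:ℝ) := exists_nat_ge _
    refine le_iSup_of_le n ?_
    simp [hg, cut_eq_one hn]
  have hgint : ∀ n, Integrable (fun y => cut (d+1) n (iota d y) * Real.exp (V (iota d y))) := by
    intro n
    refine Continuous.integrable_of_hasCompactSupport
      (((cut_continuous _ n).comp (continuous_iota d)).mul hexpVi) ?_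
    refine HasCompactSupport.intro (isCompact_closedBall (0 : EuclideanSpace ℝ (Fin d)) n)
      fun y hy => ?_
    have hyn : (n:ℝ) ≤ ‖iota d y‖ := by
      rw [norm_iota]
      have := hy
      simp only [Metric.mem_closedBall, dist_zero_right, not_le] at this
      exact this.le
    simp [cut_eq_zero hyn]
  have hlint : ∀ n, (∫⁻ y, g n y)
      = ENNReal.ofReal (∫ y, cut (d+1) n (iota d y) * Real.exp (V (iota d y))) := fun n =>
    (ofReal_integral_eq_lintegral_ofReal (hgint n) (Filter.Eventually.of_forall fun y =>
      mul_nonneg (cut_nonneg _ _ _) (Real.exp_pos _).le)).symm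
  have hfin : (∫⁻ y, ENNReal.ofReal (Real.exp (V (iota d y)))) < ⊤ := by
    calc (∫⁻ y, ENNReal.ofReal (Real.exp (V (iota d y)))) = ∫⁻ y, ⨆ n, g n y := by
          refine lintegral_congr fun y => (hsup y).symm
      _ = ⨆ n, ∫⁻ y, g n y := lintegral_iSup hgmeas hgmono
      _ ≤ ENNReal.ofReal ((Cb1 + Cb2) * ∫ x in Hs d, Real.exp (V x)) := iSup_le fun n => by
          rw [hlint n]; exact ENNReal.ofReal_le_ofReal (key n)
      _ < ⊤ := ENNReal.ofReal_lt_top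
  refine ⟨hexpVi.aestronglyMeasurable, ?_⟩
  rw [hasFiniteIntegral_iff_ofReal (Filter.Eventually.of_forall fun y => (Real.exp_pos _).le)]
  exact hfin

end Helpers

set_option maxHeartbeats 1000000 in
/-- boundary trace inequality under Assumption (B). -/
theorem sticky_boundary_trace
    (d : ℕ) (hd : 1 ≤ d)
    (V : EuclideanSpace ℝ (Fin (d + 1)) → ℝ) (W : EuclideanSpace ℝ (Fin d) → ℝ)
    (hV : ContDiff ℝ 1 V) (hW : Continuous W)
    (hZV : IntegrableOn (fun x => Real.exp (V x)) (Hs d))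
    (hZW : Integrable fun y => Real.exp (W y))
    (h : EuclideanSpace ℝ (Fin (d + 1)) → ℝ) (Cb1 Cb2 : ℝ)
    (hB : AssumptionB d V W h Cb1 Cb2) :
    ∀ s, 0 < s → ∀ f, IsTest d f →
      nuW d W (fun y => f (iota d y) ^ 2) ≤ s * gV d V f
        + (s⁻¹ * C0 d V W ^ 2 * Cb2 ^ 2 + C0 d V W * Cb1) * muV d V (fun x => f x ^ 2) := by
  intro s hs f hf
  obtain ⟨hf1, ⟨Cf, hCf⟩, ⟨Cg, hCg⟩⟩ := hf
  obtain ⟨hh2, _hder, hbddM0, hlub1, hlub2, hGG⟩ := hB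
  have hCb1 : ∀ x : EuclideanSpace ℝ (Fin (d+1)), 0 ≤ x 0 → max (-(LV d V h x)) 0 ≤ Cb1 :=
    fun x hx => hlub1.1 ⟨x, hx, rfl⟩
  have hCb2 : ∀ x : EuclideanSpace ℝ (Fin (d+1)), 0 ≤ x 0 → ‖gradient h x‖ ≤ Cb2 :=
    fun x hx => hlub2.1 ⟨x, hx, rfl⟩
  have hCb1n : (0:ℝ) ≤ Cb1 := le_trans (le_max_right _ _) (hCb1 (iota d 0) (by rw [iota_zero]))
  have hCb2n : (0:ℝ) ≤ Cb2 := le_trans (norm_nonneg _) (hCb2 (iota d 0) (by rw [iota_zero]))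
  have hCfn : (0:ℝ) ≤ Cf := le_trans (abs_nonneg _) (hCf 0)
  have hCgn : (0:ℝ) ≤ Cg := le_trans (norm_nonneg _) (hCg 0)
  have hsne : s ≠ 0 := ne_of_gt hs
  have hEι : Integrable (fun y => Real.exp (V (iota d y))) :=
    integrable_expV_iota d V h Cb1 Cb2 hV hh2 hZV hCb1 hCb2 hGG
  have hZVpos : 0 < ZV d V := by
    have hpos : 0 < (volume.restrict (Hs d))
        (Function.support fun x : EuclideanSpace ℝ (Fin (d+1)) => Real.exp (V x)) := by
      have hsupp : (Function.support fun x : EuclideanSpace ℝ (Fin (d+1)) => Real.exp (V x))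
          = Set.univ := by
        ext x; simp [Function.support, (Real.exp_pos (V x)).ne']
      rw [hsupp, Measure.restrict_apply_univ]
      exact (isOpen_Hs d).measure_pos volume
        ⟨EuclideanSpace.single 0 1, by simp [Hs, EuclideanSpace.single_apply]⟩
    exact (integral_pos_iff_support_of_nonneg_ae
      (Filter.Eventually.of_forall fun x => (Real.exp_pos _).le) hZV).2 hpos
  have hZWpos : 0 < ZW d W := by
    have hpos : 0 < volume (Function.support fun y : EuclideanSpace ℝ (Fin d) => Real.exp (W y)) := by
      have hsupp : (Function.support fun y : EuclideanSpace ℝ (Fin d) => Real.exp (W y))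
          = Set.univ := by
        ext y; simp [Function.support, (Real.exp_pos (W y)).ne']
      rw [hsupp]
      exact isOpen_univ.measure_pos volume ⟨0, trivial⟩
    exact (integral_pos_iff_support_of_nonneg_ae
      (Filter.Eventually.of_forall fun x => (Real.exp_pos _).le) hZW).2 hpos
  have hC0n : (0:ℝ) ≤ C0 d V W :=
    mul_nonneg (div_nonneg hZVpos.le hZWpos.le) (Real.exp_pos _).le
  have hM0 : ∀ y, Real.exp (W y) ≤ Real.exp (M0 d V W) * Real.exp (V (iota d y)) := by
    intro y
    rw [← Real.exp_add]
    apply Real.exp_le_exp.2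
    have h1 : W y - V (iota d y) ≤ M0 d V W :=
      le_trans (le_max_left _ _) (le_ciSup hbddM0 y)
    linarith
  have hfc : Continuous f := hf1.continuous
  have hgf : Continuous fun x => gradient f x := continuous_grad hf1
  -- integrabilities
  have i1 : IntegrableOn (fun x => f x ^ 2 * Real.exp (V x)) (Hs d) := by
    refine Integrable.bdd_mul hZV ((hfc.pow 2).aestronglyMeasurable) (c := Cf^2) (Filter.Eventually.of_forall fun x => ?_)
    rw [Real.norm_eq_abs, abs_pow]
    exact pow_le_pow_left₀ (abs_nonneg _) (hCf x) 2
  have i2 : IntegrableOn (fun x => (|f x| * ‖gradient f x‖) * Real.exp (V x)) (Hs d) := by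
    refine Integrable.bdd_mul hZV ((hfc.abs.mul hgf.norm).aestronglyMeasurable)
      (c := Cf*Cg) (Filter.Eventually.of_forall fun x => ?_)
    rw [Real.norm_eq_abs, abs_of_nonneg (mul_nonneg (abs_nonneg _) (norm_nonneg _))]
    exact mul_le_mul (hCf x) (hCg x) (norm_nonneg _) hCfn
  have i3 : IntegrableOn (fun x => ‖gradient f x‖^2 * Real.exp (V x)) (Hs d) := by
    refine Integrable.bdd_mul hZV ((hgf.norm.pow 2).aestronglyMeasurable) (c := Cg^2) (Filter.Eventually.of_forall fun x => ?_)
    rw [Real.norm_eq_abs, abs_of_nonneg (by positivity)]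
    exact pow_le_pow_left₀ (norm_nonneg _) (hCg x) 2
  have iB : Integrable (fun y => f (iota d y)^2 * Real.exp (V (iota d y))) := by
    refine Integrable.bdd_mul hEι (((hfc.comp (continuous_iota d)).pow 2).aestronglyMeasurable)
      (c := Cf^2) (Filter.Eventually.of_forall fun y => ?_)
    rw [Real.norm_eq_abs, abs_pow]
    exact pow_le_pow_left₀ (abs_nonneg _) (hCf _) 2
  have hA : (∫ y, f (iota d y)^2 * Real.exp (W y))
      ≤ Real.exp (M0 d V W) * ∫ y, f (iota d y)^2 * Real.exp (V (iota d y)) := by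
    rw [← MeasureTheory.integral_const_mul]
    refine integral_mono_of_nonneg (Filter.Eventually.of_forall fun y => by positivity)
      (iB.const_mul _) (Filter.Eventually.of_forall fun y => ?_)
    calc f (iota d y)^2 * Real.exp (W y)
        ≤ f (iota d y)^2 * (Real.exp (M0 d V W) * Real.exp (V (iota d y))) :=
          mul_le_mul_of_nonneg_left (hM0 y) (sq_nonneg _)
      _ = Real.exp (M0 d V W) * (f (iota d y)^2 * Real.exp (V (iota d y))) := by ring
  -- gradient of f^2
  have hdiff : Differentiable ℝ f := hf1.differentiable one_ne_zero
  have hder2 : ∀ x, HasFDerivAt (fun z => f z ^ 2) ((2 * f x) • fderiv ℝ f x) x := by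
    intro x
    have heq : (fun z => f z ^ 2) = fun z => f z * f z := by funext z; ring
    rw [heq]
    have := (hdiff x).hasFDerivAt.mul (hdiff x).hasFDerivAt
    rw [two_mul, add_smul]
    exact this
  have hgradsq : ∀ x, gradient (fun z => f z ^ 2) x = (2 * f x) • gradient f x := by
    intro x
    have h1 : fderiv ℝ (fun z => f z ^ 2) x = (2 * f x) • fderiv ℝ f x := (hder2 x).fderiv
    rw [gradient, h1, LinearIsometryEquiv.map_smul, gradient]
  have hlipsq : ∃ K, LipschitzWith K (fun z => f z ^ 2) := by
    refine ⟨Real.toNNReal (2*Cf*Cg), lipschitzWith_of_nnnorm_fderiv_le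
      (fun x => ((hdiff x).pow 2)) (fun x => ?_)⟩
    have h1 : ‖fderiv ℝ (fun z => f z ^ 2) x‖ ≤ 2*Cf*Cg := by
      rw [(hder2 x).fderiv, norm_smul, Real.norm_eq_abs]
      have ha : |2 * f x| ≤ 2*Cf := by
        rw [abs_mul]
        simpa using mul_le_mul_of_nonneg_left (hCf x) (by norm_num : (0:ℝ) ≤ 2)
      have hb : ‖fderiv ℝ f x‖ ≤ Cg := by rw [← norm_grad]; exact hCg x
      calc |2 * f x| * ‖fderiv ℝ f x‖ ≤ (2*Cf) * Cg :=
            mul_le_mul ha hb (norm_nonneg _) (by positivity)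
        _ = 2*Cf*Cg := by ring
    rw [← NNReal.coe_le_coe, coe_nnnorm, Real.coe_toNNReal _ (by positivity)]
    exact h1
  have hbsq : ∃ C, ∀ x, |f x ^ 2| ≤ C :=
    ⟨Cf^2, fun x => by rw [abs_pow]; exact pow_le_pow_left₀ (abs_nonneg _) (hCf x) 2⟩
  have hGGf : (∫ y, f (iota d y)^2 * Real.exp (V (iota d y)))
      = - ∫ x in Hs d, (f x ^ 2 * LV d V h x
          + (inner ℝ (gradient (fun z => f z ^ 2) x) (gradient h x) : ℝ)) * Real.exp (V x) :=
    hGG (fun z => f z ^ 2) hlipsq hbsq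
  -- master bound
  have hUint : IntegrableOn (fun x => Cb1 * (f x^2 * Real.exp (V x))
      + (2*Cb2) * ((|f x| * ‖gradient f x‖) * Real.exp (V x))) (Hs d) :=
    (i1.const_mul Cb1).add (i2.const_mul (2*Cb2))
  have hBU : (∫ y, f (iota d y)^2 * Real.exp (V (iota d y)))
      ≤ ∫ x in Hs d, (Cb1 * (f x^2 * Real.exp (V x))
        + (2*Cb2) * ((|f x| * ‖gradient f x‖) * Real.exp (V x))) := by
    rw [hGGf]
    by_cases hGint : IntegrableOn (fun x => (f x ^ 2 * LV d V h x
        + (inner ℝ (gradient (fun z => f z ^ 2) x) (gradient h x) : ℝ)) * Real.exp (V x)) (Hs d)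
    · rw [← MeasureTheory.integral_neg]
      refine setIntegral_mono_on hGint.neg hUint (measurableSet_Hs d) fun x hx => ?_
      have hx0 : (0:ℝ) ≤ x 0 := le_of_lt hx
      have hip : |(inner ℝ (gradient (fun z => f z ^ 2) x) (gradient h x) : ℝ)|
          ≤ 2*Cb2*(|f x| * ‖gradient f x‖) := by
        rw [hgradsq x, real_inner_smul_left, abs_mul]
        calc |2 * f x| * |(inner ℝ (gradient f x) (gradient h x) : ℝ)|
            ≤ (2*|f x|) * (‖gradient f x‖ * ‖gradient h x‖) := by
              refine mul_le_mul ?_ (abs_real_inner_le_norm _ _) (abs_nonneg _) (by positivity)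
              rw [abs_mul]; simp
          _ ≤ (2*|f x|) * (‖gradient f x‖ * Cb2) := by
              refine mul_le_mul_of_nonneg_left
                (mul_le_mul_of_nonneg_left (hCb2 x hx0) (norm_nonneg _)) (by positivity)
          _ = 2*Cb2*(|f x| * ‖gradient f x‖) := by ring
      have hlv : f x^2 * (-(LV d V h x)) ≤ Cb1 * f x ^ 2 := by
        calc f x^2 * (-(LV d V h x)) ≤ f x^2 * max (-(LV d V h x)) 0 :=
              mul_le_mul_of_nonneg_left (le_max_left _ _) (sq_nonneg _)
          _ ≤ f x^2 * Cb1 := mul_le_mul_of_nonneg_left (hCb1 x hx0) (sq_nonneg _)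
          _ = Cb1 * f x^2 := mul_comm _ _
      have he := (Real.exp_pos (V x)).le
      have hip2 : -(inner ℝ (gradient (fun z => f z ^ 2) x) (gradient h x) : ℝ)
          ≤ 2*Cb2*(|f x| * ‖gradient f x‖) := le_trans (neg_le_abs _) hip
      calc -((f x ^ 2 * LV d V h x
            + (inner ℝ (gradient (fun z => f z ^ 2) x) (gradient h x) : ℝ)) * Real.exp (V x))
          = (f x^2 * (-(LV d V h x))
            + -(inner ℝ (gradient (fun z => f z ^ 2) x) (gradient h x) : ℝ)) * Real.exp (V x) := by
            ring
        _ ≤ (Cb1 * f x ^ 2 + 2*Cb2*(|f x| * ‖gradient f x‖)) * Real.exp (V x) :=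
            mul_le_mul_of_nonneg_right (add_le_add hlv hip2) he
        _ = Cb1 * (f x^2 * Real.exp (V x))
            + (2*Cb2) * ((|f x| * ‖gradient f x‖) * Real.exp (V x)) := by ring
    · rw [MeasureTheory.integral_undef hGint, neg_zero]
      exact setIntegral_nonneg (measurableSet_Hs d) fun x _ => by positivity
  -- assembly
  have step1 : nuW d W (fun y => f (iota d y) ^ 2)
      ≤ (ZW d W)⁻¹ * (Real.exp (M0 d V W) * ∫ x in Hs d, (Cb1 * (f x^2 * Real.exp (V x))
        + (2*Cb2) * ((|f x| * ‖gradient f x‖) * Real.exp (V x)))) := by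
    simp only [nuW]
    refine mul_le_mul_of_nonneg_left ?_ (inv_nonneg.2 hZWpos.le)
    exact le_trans hA (mul_le_mul_of_nonneg_left hBU (Real.exp_pos _).le)
  have hcoef : (ZW d W)⁻¹ * Real.exp (M0 d V W) = (ZV d V)⁻¹ * C0 d V W := by
    rw [C0]
    field_simp
  have step2 : C0 d V W * ∫ x in Hs d, (Cb1 * (f x^2 * Real.exp (V x))
        + (2*Cb2) * ((|f x| * ‖gradient f x‖) * Real.exp (V x)))
      ≤ ∫ x in Hs d, (s * (‖gradient f x‖^2 * Real.exp (V x))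
        + (s⁻¹ * C0 d V W ^ 2 * Cb2 ^ 2 + C0 d V W * Cb1) * (f x^2 * Real.exp (V x))) := by
    rw [← MeasureTheory.integral_const_mul]
    refine setIntegral_mono_on (hUint.const_mul _)
      ((i3.const_mul s).add (i1.const_mul _)) (measurableSet_Hs d) fun x hx => ?_
    have he := (Real.exp_pos (V x)).le
    have hb2 : |f x| ^ 2 = f x^2 := sq_abs (f x)
    have hexpand : s⁻¹*((s*‖gradient f x‖ - (C0 d V W*Cb2)* |f x|) ^ 2)
        = s*‖gradient f x‖^2 - 2*(C0 d V W*Cb2)*(|f x| * ‖gradient f x‖)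
          + s⁻¹*(C0 d V W*Cb2)^2*|f x| ^ 2 := by
      field_simp
      ring_nf
    have hnn := mul_nonneg (inv_nonneg.2 hs.le)
      (sq_nonneg (s*‖gradient f x‖ - (C0 d V W*Cb2)*|f x|))
    rw [hexpand, hb2] at hnn
    have hpoly : C0 d V W * (Cb1 * (f x^2) + (2*Cb2) * (|f x| * ‖gradient f x‖))
        ≤ s * ‖gradient f x‖^2
          + (s⁻¹ * C0 d V W ^ 2 * Cb2 ^ 2 + C0 d V W * Cb1) * (f x^2) := by
      nlinarith [hnn]
    calc C0 d V W * (Cb1 * (f x^2 * Real.exp (V x))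
          + (2*Cb2) * ((|f x| * ‖gradient f x‖) * Real.exp (V x)))
        = (C0 d V W * (Cb1 * (f x^2) + (2*Cb2) * (|f x| * ‖gradient f x‖))) * Real.exp (V x) := by
          ring
      _ ≤ (s * ‖gradient f x‖^2
          + (s⁻¹ * C0 d V W ^ 2 * Cb2 ^ 2 + C0 d V W * Cb1) * (f x^2)) * Real.exp (V x) :=
          mul_le_mul_of_nonneg_right hpoly he
      _ = s * (‖gradient f x‖^2 * Real.exp (V x))
          + (s⁻¹ * C0 d V W ^ 2 * Cb2 ^ 2 + C0 d V W * Cb1) * (f x^2 * Real.exp (V x)) := by ring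
  have step3 : (∫ x in Hs d, (s * (‖gradient f x‖^2 * Real.exp (V x))
        + (s⁻¹ * C0 d V W ^ 2 * Cb2 ^ 2 + C0 d V W * Cb1) * (f x^2 * Real.exp (V x))))
      = s * (∫ x in Hs d, ‖gradient f x‖^2 * Real.exp (V x))
        + (s⁻¹ * C0 d V W ^ 2 * Cb2 ^ 2 + C0 d V W * Cb1)
          * ∫ x in Hs d, f x^2 * Real.exp (V x) := by
    rw [MeasureTheory.integral_add (i3.const_mul s) (i1.const_mul _),
      MeasureTheory.integral_const_mul, MeasureTheory.integral_const_mul]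
  calc nuW d W (fun y => f (iota d y) ^ 2)
      ≤ (ZW d W)⁻¹ * (Real.exp (M0 d V W) * ∫ x in Hs d, (Cb1 * (f x^2 * Real.exp (V x))
        + (2*Cb2) * ((|f x| * ‖gradient f x‖) * Real.exp (V x)))) := step1
    _ = (ZV d V)⁻¹ * (C0 d V W * ∫ x in Hs d, (Cb1 * (f x^2 * Real.exp (V x))
        + (2*Cb2) * ((|f x| * ‖gradient f x‖) * Real.exp (V x)))) := by
        rw [← mul_assoc, hcoef, mul_assoc]
    _ ≤ (ZV d V)⁻¹ * (s * (∫ x in Hs d, ‖gradient f x‖^2 * Real.exp (V x))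
        + (s⁻¹ * C0 d V W ^ 2 * Cb2 ^ 2 + C0 d V W * Cb1)
          * ∫ x in Hs d, f x^2 * Real.exp (V x)) :=
        mul_le_mul_of_nonneg_left (step2.trans_eq step3) (inv_nonneg.2 hZVpos.le)
    _ = s * gV d V f
        + (s⁻¹ * C0 d V W ^ 2 * Cb2 ^ 2 + C0 d V W * Cb1) * muV d V (fun x => f x ^ 2) := by
        simp only [gV, muV]
        ring

end
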